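/- Fix u, v ∈ [0,1], 0 ≤ t₀ < 𝒯, and let T : [0,𝒯] → ℝ be a non-decreasing function with T(t₀) > 0. Let (Tₙ)ₙ be a sequence of non-decreasing functions Tₙ : [0,𝒯] → [0,∞) such that sup_{r ∈ [0,𝒯]} |Tₙ(r) − T(r)| → 0 as n → ∞. Then sup over (s,t) ∈ [t₀,𝒯]² of |ψ(Tₙ(s),Tₙ(t);u,v) − ψ(T(s),T(t);u,v)| → 0 as n → ∞. -/

import Mathlib

open MeasureTheory Set Filter
open Topology

/-- Density of the standard normal distribution (φ). -/
noncomputable def stdNormalPDF (x : ℝ) : ℝ := (Real.sqrt (2 * Real.pi))⁻¹ * Real.exp (-x ^ 2 / 2)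

/-- Cumulative distribution function of the standard normal distribution (Φ). -/
noncomputable def stdNormalCDF (x : ℝ) : ℝ := ∫ t in Set.Iic x, stdNormalPDF t

/-- The standard normal quantile function (Φ⁻¹), the inverse of Φ on (0,1). -/
noncomputable def stdNormalCDFInv : ℝ → ℝ := Function.invFun stdNormalCDF

/-- The integrand of the Brownian-copula kernel; the `if` branches encode the
conventions Φ⁻¹(0) = -∞ (so Φ(·) = 0) and Φ⁻¹(1) = +∞ (so Φ(·) = 1). -/
noncomputable def psiIntegrand (s t v w : ℝ) : ℝ :=
  if v ≤ 0 then 0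
  else if 1 ≤ v then 1
  else stdNormalCDF ((Real.sqrt (max s t) * stdNormalCDFInv v -
      Real.sqrt (min s t) * stdNormalCDFInv w) / Real.sqrt |t - s|)

/-- The Brownian-copula kernel ψ(s,t;u,v). -/
noncomputable def psi (s t u v : ℝ) : ℝ :=
  if 0 < |t - s| then ∫ w in (0:ℝ)..u, psiIntegrand s t v w
  else if 0 < t then min u v
  else u * v

lemma pdf_continuous : Continuous stdNormalPDF := by
  unfold stdNormalPDF
  fun_prop

lemma pdf_pos (x : ℝ) : 0 < stdNormalPDF x := by
  unfold stdNormalPDF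
  positivity

lemma pdf_integrable : Integrable stdNormalPDF := by
  have h : Integrable (fun x : ℝ => Real.exp (-(1/2) * x ^ 2)) := integrable_exp_neg_mul_sq (by norm_num)
  have := h.const_mul (Real.sqrt (2 * Real.pi))⁻¹
  refine this.congr (Eventually.of_forall fun x => ?_)
  unfold stdNormalPDF
  ring_nf

lemma pdf_total : ∫ x, stdNormalPDF x = 1 := by
  have h : ∫ x : ℝ, Real.exp (-(1/2) * x ^ 2) = Real.sqrt (Real.pi / (1/2)) :=
    integral_gaussian (1/2)
  have h2 : ∫ x, stdNormalPDF x = (Real.sqrt (2 * Real.pi))⁻¹ * ∫ x : ℝ, Real.exp (-(1/2) * x ^ 2) := by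
    rw [← integral_const_mul]
    congr 1; ext x; unfold stdNormalPDF; ring_nf
  rw [h2, h]
  rw [show Real.pi / (1/2) = 2 * Real.pi by ring]
  rw [inv_mul_cancel₀]
  positivity

lemma cdf_sub (x y : ℝ) : stdNormalCDF y - stdNormalCDF x = ∫ t in x..y, stdNormalPDF t :=
  intervalIntegral.integral_Iic_sub_Iic pdf_integrable.integrableOn pdf_integrable.integrableOn

lemma cdf_strictMono : StrictMono stdNormalCDF := by
  intro x y hxy
  have h := cdf_sub x y
  have hpos : 0 < ∫ t in x..y, stdNormalPDF t :=
    intervalIntegral.intervalIntegral_pos_of_pos (pdf_integrable.intervalIntegrable) pdf_pos hxy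
  linarith

lemma cdf_continuous : Continuous stdNormalCDF := by
  have : stdNormalCDF = fun y => (∫ t in (0:ℝ)..y, stdNormalPDF t) + stdNormalCDF 0 := by
    funext y
    have := cdf_sub 0 y
    linarith
  rw [this]
  exact (intervalIntegral.continuous_primitive (fun a b => pdf_integrable.intervalIntegrable) 0).add
    continuous_const

lemma cdf_tendsto_atTop : Tendsto stdNormalCDF atTop (𝓝 1) := by
  have h := tendsto_setIntegral_of_monotone (μ := volume) (f := stdNormalPDF)
    (s := fun x : ℝ => Iic x) (fun x => measurableSet_Iic)
    (fun a b hab => Iic_subset_Iic.2 hab) (pdf_integrable.integrableOn)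
  have hU : ⋃ x : ℝ, Iic x = univ := iUnion_Iic
  rw [hU] at h
  simp only [Measure.restrict_univ, pdf_total] at h
  exact h

lemma cdf_tendsto_atBot : Tendsto stdNormalCDF atBot (𝓝 0) := by
  have h := tendsto_setIntegral_of_antitone (μ := volume) (f := stdNormalPDF)
    (s := fun x : ℝ => Iic (-x)) (fun x => measurableSet_Iic)
    (fun a b hab => Iic_subset_Iic.2 (by linarith)) ⟨0, pdf_integrable.integrableOn⟩
  have hI : ⋂ x : ℝ, Iic (-x) = ∅ := by
    ext y; simp only [mem_iInter, mem_Iic, mem_empty_iff_false, iff_false, not_forall, not_le]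
    exact ⟨-(y - 1), by linarith⟩
  rw [hI] at h
  simp only [Measure.restrict_empty, integral_zero_measure] at h
  have : Tendsto (fun x : ℝ => -x) atBot atTop := tendsto_neg_atBot_atTop
  have := h.comp this
  refine this.congr fun x => ?_
  simp [Function.comp, stdNormalCDF]

lemma cdf_mem_Ioo (x : ℝ) : stdNormalCDF x ∈ Ioo (0:ℝ) 1 := by
  have h1 : stdNormalCDF x ≤ 1 := cdf_strictMono.monotone.ge_of_tendsto cdf_tendsto_atTop x
  have h0 : 0 ≤ stdNormalCDF (x - 1) := cdf_strictMono.monotone.le_of_tendsto cdf_tendsto_atBot _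
  have h2 := cdf_strictMono (show x - 1 < x by linarith)
  have h3 := cdf_strictMono (show x < x + 1 by linarith)
  have h4 : stdNormalCDF (x+1) ≤ 1 := cdf_strictMono.monotone.ge_of_tendsto cdf_tendsto_atTop _
  exact ⟨by linarith, by linarith⟩

lemma cdf_surj {v : ℝ} (hv : v ∈ Ioo (0:ℝ) 1) : ∃ x, stdNormalCDF x = v := by
  obtain ⟨x1, hx1⟩ : ∃ x1, stdNormalCDF x1 < v :=
    ((tendsto_order.1 cdf_tendsto_atBot).2 v hv.1).exists
  obtain ⟨x2, hx2⟩ : ∃ x2, v < stdNormalCDF x2 :=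
    ((tendsto_order.1 cdf_tendsto_atTop).1 v hv.2).exists
  have := intermediate_value_univ x1 x2 cdf_continuous
  exact this ⟨hx1.le, hx2.le⟩

lemma cdf_inv_eq {v : ℝ} (hv : v ∈ Ioo (0:ℝ) 1) : stdNormalCDF (stdNormalCDFInv v) = v :=
  Function.invFun_eq (cdf_surj hv)

lemma inv_strictMonoOn : StrictMonoOn stdNormalCDFInv (Ioo (0:ℝ) 1) := by
  intro a ha b hb hab
  have h1 := cdf_inv_eq ha
  have h2 := cdf_inv_eq hb
  by_contra h
  push_neg at h
  have := cdf_strictMono.monotone h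
  rw [h1, h2] at this
  exact absurd hab (not_lt.2 this)

noncomputable def cdfIso : ℝ ≃o Ioo (0:ℝ) 1 :=
  StrictMono.orderIsoOfSurjective (fun x => ⟨stdNormalCDF x, cdf_mem_Ioo x⟩)
    (fun a b hab => by simpa using cdf_strictMono hab)
    (fun v => by obtain ⟨x, hx⟩ := cdf_surj v.2; exact ⟨x, Subtype.ext hx⟩)

lemma cdfIso_apply (x : ℝ) : (cdfIso x : ℝ) = stdNormalCDF x := rfl

lemma inv_eq_iso {v : ℝ} (hv : v ∈ Ioo (0:ℝ) 1) :
    stdNormalCDFInv v = (cdfIso.symm ⟨v, hv⟩ : ℝ) := by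
  apply cdf_strictMono.injective
  rw [cdf_inv_eq hv, ← cdfIso_apply]
  rw [cdfIso.apply_symm_apply]

lemma inv_continuousOn : ContinuousOn stdNormalCDFInv (Ioo (0:ℝ) 1) := by
  rw [continuousOn_iff_continuous_restrict]
  have h : (Ioo (0:ℝ) 1).restrict stdNormalCDFInv = fun v => (cdfIso.symm v : ℝ) := by
    funext v
    exact inv_eq_iso v.2
  rw [show (Ioo (0:ℝ) 1).domRestrict stdNormalCDFInv = _ from h]
  exact cdfIso.symm.continuous


lemma psiIntegrand_nonneg (s t v w : ℝ) : 0 ≤ psiIntegrand s t v w := by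
  unfold psiIntegrand
  split_ifs
  · exact le_refl 0
  · exact zero_le_one
  · exact (cdf_mem_Ioo _).1.le

lemma psiIntegrand_le_one (s t v w : ℝ) : psiIntegrand s t v w ≤ 1 := by
  unfold psiIntegrand
  split_ifs
  · exact zero_le_one
  · exact le_refl 1
  · exact (cdf_mem_Ioo _).2.le

lemma psiIntegrand_norm_le (s t v w : ℝ) : ‖psiIntegrand s t v w‖ ≤ 1 := by
  rw [Real.norm_eq_abs, abs_of_nonneg (psiIntegrand_nonneg s t v w)]
  exact psiIntegrand_le_one s t v w

lemma psiIntegrand_continuousOn_w (s t v : ℝ) :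
    ContinuousOn (fun w => psiIntegrand s t v w) (Ioo (0:ℝ) 1) := by
  unfold psiIntegrand
  split_ifs
  · exact continuousOn_const
  · exact continuousOn_const
  · refine cdf_continuous.comp_continuousOn ?_
    exact ((continuousOn_const.sub (continuousOn_const.mul inv_continuousOn)).div_const _)

lemma psiIntegrand_aesm {u : ℝ} (hu : u ∈ Icc (0:ℝ) 1) (s t v : ℝ) :
    AEStronglyMeasurable (fun w => psiIntegrand s t v w) (volume.restrict (Set.uIoc 0 u)) := by
  rw [uIoc_of_le hu.1, ← Measure.restrict_congr_set Ioo_ae_eq_Ioc]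
  exact ((psiIntegrand_continuousOn_w s t v).mono
    (Ioo_subset_Ioo le_rfl hu.2)).aestronglyMeasurable measurableSet_Ioo

lemma integral_indicator_lt {u v : ℝ} (hu : u ∈ Icc (0:ℝ) 1) (hv : v ∈ Ioo (0:ℝ) 1) :
    (∫ w in (0:ℝ)..u, (if w < v then (1:ℝ) else 0)) = min u v := by
  have h1 : (fun w : ℝ => if w < v then (1:ℝ) else 0) = (Iio v).indicator (fun _ => (1:ℝ)) := by
    funext w
    simp [indicator, mem_Iio]
  rw [intervalIntegral.integral_of_le hu.1, h1, setIntegral_indicator measurableSet_Iio]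
  rcases lt_or_ge u v with h | h
  · have : Ioc (0:ℝ) u ∩ Iio v = Ioc 0 u := by
      ext w
      simp only [mem_inter_iff, mem_Ioc, mem_Iio]
      constructor
      · exact fun hw => hw.1
      · exact fun hw => ⟨hw, lt_of_le_of_lt hw.2 h⟩
    rw [this]
    simp only [setIntegral_const, smul_eq_mul, mul_one, Real.volume_Ioc]
    rw [min_eq_left h.le, Real.volume_real_Ioc_of_le hu.1]
    ring
  · have : Ioc (0:ℝ) u ∩ Iio v = Ioo 0 v := by
      ext w
      simp only [mem_inter_iff, mem_Ioc, mem_Ioo, mem_Iio]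
      constructor
      · exact fun hw => ⟨hw.1.1, hw.2⟩
      · exact fun hw => ⟨⟨hw.1, le_trans hw.2.le h⟩, hw.2⟩
    rw [this]
    simp only [setIntegral_const, smul_eq_mul, mul_one, Real.volume_Ioo]
    rw [min_eq_right h, Real.volume_real_Ioo_of_le hv.1.le]
    ring

lemma tendsto_split {α β : Type*} {f : α → β} {l : Filter α} {F : Filter β} (s : Set α)
    (h1 : Tendsto f (l ⊓ 𝓟 s) F) (h2 : Tendsto f (l ⊓ 𝓟 sᶜ) F) : Tendsto f l F := by
  have hl : l = l ⊓ 𝓟 s ⊔ l ⊓ 𝓟 sᶜ := by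
    rw [← inf_sup_left, sup_principal, union_compl_self, principal_univ, inf_top_eq]
  rw [hl]
  exact tendsto_sup.2 ⟨h1, h2⟩

lemma psi_continuousAt_offdiag {u v : ℝ} (hu : u ∈ Icc (0:ℝ) 1) {p₀ : ℝ × ℝ}
    (hp : p₀.1 ≠ p₀.2) : ContinuousAt (fun p : ℝ × ℝ => psi p.1 p.2 u v) p₀ := by
  have hd : 0 < |p₀.2 - p₀.1| := abs_pos.2 (sub_ne_zero.2 (Ne.symm hp))
  have habs : Continuous fun p : ℝ × ℝ => |p.2 - p.1| := (continuous_snd.sub continuous_fst).abs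
  have hev : ∀ᶠ p : ℝ × ℝ in 𝓝 p₀, 0 < |p.2 - p.1| :=
    (isOpen_lt continuous_const habs).mem_nhds hd
  have key : Tendsto (fun p : ℝ × ℝ => ∫ w in (0:ℝ)..u, psiIntegrand p.1 p.2 v w) (𝓝 p₀)
      (𝓝 (∫ w in (0:ℝ)..u, psiIntegrand p₀.1 p₀.2 v w)) := by
    apply intervalIntegral.tendsto_integral_filter_of_dominated_convergence (fun _ => (1:ℝ))
    · exact Eventually.of_forall fun p => psiIntegrand_aesm hu _ _ _
    · exact Eventually.of_forall fun p =>
        Eventually.of_forall fun w _ => psiIntegrand_norm_le _ _ _ _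
    · exact intervalIntegrable_const
    · filter_upwards with w _
      unfold psiIntegrand
      split_ifs
      · exact tendsto_const_nhds
      · exact tendsto_const_nhds
      · refine (cdf_continuous.tendsto _).comp ?_
        have hne : Real.sqrt |p₀.2 - p₀.1| ≠ 0 := by
          positivity
        exact (ContinuousAt.div
          (((Real.continuous_sqrt.comp (continuous_fst.max continuous_snd)).mul
              continuous_const).sub
            ((Real.continuous_sqrt.comp (continuous_fst.min continuous_snd)).mul
              continuous_const)).continuousAt
          (Real.continuous_sqrt.comp habs).continuousAt hne)
  have hval : psi p₀.1 p₀.2 u v = ∫ w in (0:ℝ)..u, psiIntegrand p₀.1 p₀.2 v w := if_pos hd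
  have := key.congr' (hev.mono fun p hp' => (if_pos hp' :
    psi p.1 p.2 u v = ∫ w in (0:ℝ)..u, psiIntegrand p.1 p.2 v w).symm)
  show Tendsto _ (𝓝 p₀) (𝓝 (psi p₀.1 p₀.2 u v))
  rw [hval]
  exact this

lemma ae_ne_real (c : ℝ) : ∀ᵐ w : ℝ, w ≠ c := by
  rw [ae_iff]
  have h : {a : ℝ | ¬ a ≠ c} = {c} := by ext a; simp
  rw [h]
  exact measure_singleton c

lemma psi_continuousAt_diag {u v : ℝ} (hu : u ∈ Icc (0:ℝ) 1) (hv : v ∈ Ioo (0:ℝ) 1)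
    {a₀ : ℝ} (ha₀ : 0 < a₀) : ContinuousAt (fun p : ℝ × ℝ => psi p.1 p.2 u v) (a₀, a₀) := by
  have habs : Continuous fun p : ℝ × ℝ => |p.2 - p.1| := (continuous_snd.sub continuous_fst).abs
  set S : Set (ℝ × ℝ) := {p | 0 < |p.2 - p.1|} with hS
  have hval : psi a₀ a₀ u v = min u v := by
    simp only [psi, sub_self, abs_zero, lt_irrefl, if_false, if_pos ha₀, lt_self_iff_false]
  show Tendsto _ (𝓝 (a₀, a₀)) (𝓝 (psi (a₀, a₀).1 (a₀, a₀).2 u v))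
  simp only
  rw [hval]
  apply tendsto_split S
  · -- off-diagonal part
    have key : Tendsto (fun p : ℝ × ℝ => ∫ w in (0:ℝ)..u, psiIntegrand p.1 p.2 v w)
        (𝓝 (a₀, a₀) ⊓ 𝓟 S) (𝓝 (∫ w in (0:ℝ)..u, (if w < v then (1:ℝ) else 0))) := by
      apply intervalIntegral.tendsto_integral_filter_of_dominated_convergence (fun _ => (1:ℝ))
      · exact Eventually.of_forall fun p => psiIntegrand_aesm hu _ _ _
      · exact Eventually.of_forall fun p =>
          Eventually.of_forall fun w _ => psiIntegrand_norm_le _ _ _ _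
      · exact intervalIntegrable_const
      · filter_upwards [ae_ne_real 1, ae_ne_real v] with w hw1 hwv hmem
        rw [uIoc_of_le hu.1] at hmem
        have hw : w ∈ Ioo (0:ℝ) 1 := ⟨hmem.1, lt_of_le_of_ne (le_trans hmem.2 hu.2) hw1⟩
        have hv0 : ¬ v ≤ 0 := not_le.2 hv.1
        have hv1 : ¬ 1 ≤ v := not_le.2 hv.2
        simp only [psiIntegrand, hv0, hv1, if_false]
        set A := stdNormalCDFInv v
        set B := stdNormalCDFInv w
        have hnum : Tendsto (fun p : ℝ × ℝ =>
            Real.sqrt (max p.1 p.2) * A - Real.sqrt (min p.1 p.2) * B)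
            (𝓝 (a₀, a₀) ⊓ 𝓟 S) (𝓝 (Real.sqrt a₀ * A - Real.sqrt a₀ * B)) := by
          have hc : ContinuousAt (fun p : ℝ × ℝ =>
              Real.sqrt (max p.1 p.2) * A - Real.sqrt (min p.1 p.2) * B) (a₀, a₀) :=
            (((Real.continuous_sqrt.comp (continuous_fst.max continuous_snd)).mul
                continuous_const).sub
              ((Real.continuous_sqrt.comp (continuous_fst.min continuous_snd)).mul
                continuous_const)).continuousAt
          have h2 := hc.tendsto.mono_left (inf_le_left : 𝓝 (a₀, a₀) ⊓ 𝓟 S ≤ _)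
          simpa using h2
        have hden : Tendsto (fun p : ℝ × ℝ => Real.sqrt |p.2 - p.1|)
            (𝓝 (a₀, a₀) ⊓ 𝓟 S) (𝓝[>] 0) := by
          rw [tendsto_nhdsWithin_iff]
          constructor
          · have := ((Real.continuous_sqrt.comp habs).tendsto (a₀, a₀)).mono_left
              (inf_le_left : 𝓝 (a₀, a₀) ⊓ 𝓟 S ≤ _)
            simpa [Function.comp_def] using this
          · refine eventually_inf_principal.2 (Eventually.of_forall fun p hp => ?_)
            exact Real.sqrt_pos.2 hp
        have hinv : Tendsto (fun p : ℝ × ℝ => (Real.sqrt |p.2 - p.1|)⁻¹)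
            (𝓝 (a₀, a₀) ⊓ 𝓟 S) atTop := tendsto_inv_nhdsGT_zero.comp hden
        have hargeq : ∀ p : ℝ × ℝ,
            (Real.sqrt (max p.1 p.2) * A - Real.sqrt (min p.1 p.2) * B) / Real.sqrt |p.2 - p.1|
            = (Real.sqrt (max p.1 p.2) * A - Real.sqrt (min p.1 p.2) * B) *
              (Real.sqrt |p.2 - p.1|)⁻¹ := fun p => div_eq_mul_inv _ _
        rcases lt_or_gt_of_ne hwv with hlt | hgt
        · -- w < v, limit 1
          have hBA : B < A := inv_strictMonoOn hw hv hlt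
          have hcpos : 0 < Real.sqrt a₀ * A - Real.sqrt a₀ * B := by
            have := Real.sqrt_pos.2 ha₀
            nlinarith
          have harg : Tendsto (fun p : ℝ × ℝ =>
              (Real.sqrt (max p.1 p.2) * A - Real.sqrt (min p.1 p.2) * B) /
                Real.sqrt |p.2 - p.1|) (𝓝 (a₀, a₀) ⊓ 𝓟 S) atTop := by
            simp only [hargeq]
            exact Filter.Tendsto.pos_mul_atTop hcpos hnum hinv
          rw [if_pos hlt]
          exact cdf_tendsto_atTop.comp harg
        · -- v < w, limit 0
          have hBA : A < B := inv_strictMonoOn hv hw hgt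
          have hcneg : Real.sqrt a₀ * A - Real.sqrt a₀ * B < 0 := by
            have := Real.sqrt_pos.2 ha₀
            nlinarith
          have harg : Tendsto (fun p : ℝ × ℝ =>
              (Real.sqrt (max p.1 p.2) * A - Real.sqrt (min p.1 p.2) * B) /
                Real.sqrt |p.2 - p.1|) (𝓝 (a₀, a₀) ⊓ 𝓟 S) atBot := by
            simp only [hargeq]
            exact hnum.neg_mul_atTop hcneg hinv
          rw [if_neg (not_lt.2 hgt.le)]
          exact cdf_tendsto_atBot.comp harg
    rw [integral_indicator_lt hu hv] at key
    refine key.congr' ?_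
    refine eventually_inf_principal.2 (Eventually.of_forall fun p hp => ?_)
    exact (if_pos hp).symm
  · -- diagonal part
    have hpos : ∀ᶠ p : ℝ × ℝ in 𝓝 (a₀, a₀), 0 < p.2 :=
      (isOpen_lt continuous_const continuous_snd).mem_nhds ha₀
    refine Tendsto.congr' ?_ tendsto_const_nhds
    refine eventually_inf_principal.2 ?_
    filter_upwards [hpos] with p hp2 hpS
    have : ¬ 0 < |p.2 - p.1| := hpS
    simp only [psi, this, if_false, if_pos hp2]

lemma psi_eq_on_U {u v : ℝ} (hu : u ∈ Icc (0:ℝ) 1) {p : ℝ × ℝ}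
    (hp : p ∈ {q : ℝ × ℝ | 0 < q.1 ∧ 0 < q.2}) (hv0 : v = 0 ∨ v = 1) :
    psi p.1 p.2 u v = if v = 0 then 0 else u := by
  rcases hv0 with rfl | rfl
  · simp only [if_pos rfl]
    by_cases hd : 0 < |p.2 - p.1|
    · simp only [psi, if_pos hd]
      have : ∀ w : ℝ, psiIntegrand p.1 p.2 0 w = 0 := fun w => by
        simp [psiIntegrand]
      simp [this]
    · simp only [psi, if_neg hd, if_pos hp.2]
      exact min_eq_right hu.1
  · simp only [if_neg one_ne_zero]
    by_cases hd : 0 < |p.2 - p.1|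
    · simp only [psi, if_pos hd]
      have : ∀ w : ℝ, psiIntegrand p.1 p.2 1 w = 1 := fun w => by
        simp [psiIntegrand]
      simp [this]
    · simp only [psi, if_neg hd, if_pos hp.2]
      exact min_eq_left hu.2

lemma psi_continuousOn {u v : ℝ} (hu : u ∈ Icc (0:ℝ) 1) (hv : v ∈ Icc (0:ℝ) 1) :
    ContinuousOn (fun p : ℝ × ℝ => psi p.1 p.2 u v) {q : ℝ × ℝ | 0 < q.1 ∧ 0 < q.2} := by
  rcases eq_or_lt_of_le hv.1 with hv0 | hv0
  · refine (continuousOn_const (c := (0:ℝ))).congr fun p hp => ?_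
    rw [psi_eq_on_U hu hp (Or.inl hv0.symm), if_pos hv0.symm]
  rcases eq_or_lt_of_le hv.2 with hv1 | hv1
  · refine (continuousOn_const (c := u)).congr fun p hp => ?_
    rw [psi_eq_on_U hu hp (Or.inr hv1), if_neg (by rw [hv1]; exact one_ne_zero)]
  intro p hp
  have hopen : IsOpen {q : ℝ × ℝ | 0 < q.1 ∧ 0 < q.2} :=
    (isOpen_lt continuous_const continuous_fst).inter (isOpen_lt continuous_const continuous_snd)
  refine ContinuousAt.continuousWithinAt ?_
  by_cases hd : p.1 = p.2
  · have : p = (p.1, p.1) := by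
      ext
      · rfl
      · exact hd.symm
    rw [this]
    exact psi_continuousAt_diag hu ⟨hv0, hv1⟩ hp.1
  · exact psi_continuousAt_offdiag hu hd


/-- If Tₙ → T uniformly on [0,𝒯], where T is non-decreasing with T(t₀) > 0 and the Tₙ are
non-decreasing and non-negative, then ψ(Tₙ(s),Tₙ(t);u,v) → ψ(T(s),T(t);u,v) uniformly over
(s,t) ∈ [t₀,𝒯]². -/
theorem psi_uniform_convergence (u v t₀ 𝒯 : ℝ)
    (hu : u ∈ Set.Icc (0:ℝ) 1) (hv : v ∈ Set.Icc (0:ℝ) 1)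
    (ht₀ : 0 ≤ t₀) (ht₀𝒯 : t₀ < 𝒯)
    (T : ℝ → ℝ) (hT : MonotoneOn T (Set.Icc 0 𝒯)) (hTpos : 0 < T t₀)
    (Tn : ℕ → ℝ → ℝ) (hTn : ∀ n, MonotoneOn (Tn n) (Set.Icc 0 𝒯))
    (hTnn : ∀ n, ∀ r ∈ Set.Icc (0:ℝ) 𝒯, 0 ≤ Tn n r)
    (hconv : TendstoUniformlyOn Tn T Filter.atTop (Set.Icc 0 𝒯)) :
    TendstoUniformlyOn (fun n (p : ℝ × ℝ) => psi (Tn n p.1) (Tn n p.2) u v)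
      (fun p : ℝ × ℝ => psi (T p.1) (T p.2) u v) Filter.atTop
      (Set.Icc t₀ 𝒯 ×ˢ Set.Icc t₀ 𝒯) := by
  set c := T t₀ with hc
  set C := T 𝒯 with hC
  have ht₀mem : t₀ ∈ Icc (0:ℝ) 𝒯 := ⟨ht₀, ht₀𝒯.le⟩
  have h𝒯mem : 𝒯 ∈ Icc (0:ℝ) 𝒯 := ⟨le_trans ht₀ ht₀𝒯.le, le_rfl⟩
  have hcC : c ≤ C := hT ht₀mem h𝒯mem ht₀𝒯.le
  have hc2 : 0 < c / 2 := half_pos hTpos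
  have hK : IsCompact (Icc (c/2) (C + c/2) ×ˢ Icc (c/2) (C + c/2)) :=
    isCompact_Icc.prod isCompact_Icc
  have hKU : Icc (c/2) (C + c/2) ×ˢ Icc (c/2) (C + c/2) ⊆
      {q : ℝ × ℝ | 0 < q.1 ∧ 0 < q.2} := by
    rintro ⟨x, y⟩ ⟨hx, hy⟩
    exact ⟨lt_of_lt_of_le hc2 hx.1, lt_of_lt_of_le hc2 hy.1⟩
  have hUC := hK.uniformContinuousOn_of_continuous ((psi_continuousOn hu hv).mono hKU)
  rw [Metric.uniformContinuousOn_iff] at hUC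
  rw [Metric.tendstoUniformlyOn_iff]
  intro ε hε
  obtain ⟨δ, hδ, hδ'⟩ := hUC ε hε
  have hmem := (Metric.tendstoUniformlyOn_iff.1 hconv) (min δ (c/2)) (lt_min hδ hc2)
  filter_upwards [hmem] with n hn
  rintro ⟨s, t⟩ hst
  have hs := hst.1
  have ht := hst.2
  have hssub : s ∈ Icc (0:ℝ) 𝒯 := ⟨le_trans ht₀ hs.1, hs.2⟩
  have htsub : t ∈ Icc (0:ℝ) 𝒯 := ⟨le_trans ht₀ ht.1, ht.2⟩
  have hbound : ∀ r ∈ Icc (0:ℝ) 𝒯, r ∈ Icc t₀ 𝒯 →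
      T r ∈ Icc (c/2) (C + c/2) ∧ Tn n r ∈ Icc (c/2) (C + c/2) ∧
      dist (T r) (Tn n r) < δ := by
    intro r hr hr'
    have hTr : c ≤ T r := hT ht₀mem hr hr'.1
    have hTr' : T r ≤ C := hT hr h𝒯mem hr'.2
    have hd := hn r hr
    rw [Real.dist_eq] at hd
    have hd1 : |T r - Tn n r| < c / 2 := lt_of_lt_of_le hd (min_le_right _ _)
    have hd2 : |T r - Tn n r| < δ := lt_of_lt_of_le hd (min_le_left _ _)
    rw [abs_lt] at hd1
    refine ⟨⟨by linarith, by linarith⟩, ⟨by linarith, by linarith⟩, ?_⟩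
    rw [Real.dist_eq]
    exact hd2
  obtain ⟨hT1, hTn1, hd1⟩ := hbound s hssub hs
  obtain ⟨hT2, hTn2, hd2⟩ := hbound t htsub ht
  have hx : (T s, T t) ∈ Icc (c/2) (C + c/2) ×ˢ Icc (c/2) (C + c/2) := ⟨hT1, hT2⟩
  have hy : (Tn n s, Tn n t) ∈ Icc (c/2) (C + c/2) ×ˢ Icc (c/2) (C + c/2) := ⟨hTn1, hTn2⟩
  have hdist : dist ((T s, T t) : ℝ × ℝ) (Tn n s, Tn n t) < δ := by
    rw [Prod.dist_eq]
    exact max_lt hd1 hd2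
  exact hδ' (T s, T t) hx (Tn n s, Tn n t) hy hdist
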